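/- Let U⁽¹⁾, U⁽²⁾ be unitary matrices in the block form above and V a unitary p×p matrix. If the p×p matrix V U⁽¹⁾₂₂ V* U⁽²⁾₁₁ has 1 as an eigenvalue with eigenvector c (i.e. V U⁽¹⁾₂₂ V* U⁽²⁾₁₁ c = c), then (U⁽²⁾₁₁)* U⁽²⁾₁₁ c = c and consequently U⁽²⁾₂₁ c = 0. -/

import Mathlib

open Matrix

noncomputable def qnorm {k : ℕ} (v : Fin k → ℂ) : ℝ := (star v ⬝ᵥ v).re

lemma qnorm_eq {k : ℕ} (v : Fin k → ℂ) : qnorm v = ∑ i, Complex.normSq (v i) := by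
  simp [qnorm, dotProduct, Complex.normSq_apply, Complex.mul_re]

lemma qnorm_nonneg {k : ℕ} (v : Fin k → ℂ) : 0 ≤ qnorm v := by
  rw [qnorm_eq]; exact Finset.sum_nonneg fun i _ => Complex.normSq_nonneg _

lemma qnorm_eq_zero {k : ℕ} {v : Fin k → ℂ} (h : qnorm v ≤ 0) : v = 0 := by
  rw [qnorm_eq] at h
  have h0 : ∑ i, Complex.normSq (v i) = 0 :=
    le_antisymm h (Finset.sum_nonneg fun i _ => Complex.normSq_nonneg _)
  funext i
  have := (Finset.sum_eq_zero_iff_of_nonneg (fun i _ => Complex.normSq_nonneg (v i))).1 h0 i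
    (Finset.mem_univ i)
  simpa using Complex.normSq_eq_zero.1 this

lemma key {k l : ℕ} (M N : Matrix (Fin k) (Fin l) ℂ) (u w : Fin l → ℂ) :
    star (M.mulVec u) ⬝ᵥ (N.mulVec w) = star u ⬝ᵥ ((Mᴴ * N).mulVec w) := by
  simp only [star_mulVec, dotProduct_mulVec, vecMul_vecMul]

lemma qnorm_split {k l m : ℕ} {M : Matrix (Fin k) (Fin m) ℂ} {N : Matrix (Fin l) (Fin m) ℂ}
    (hMN : Mᴴ * M + Nᴴ * N = 1) (u : Fin m → ℂ) :
    qnorm u = qnorm (M.mulVec u) + qnorm (N.mulVec u) := by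
  have : star (M.mulVec u) ⬝ᵥ (M.mulVec u) + star (N.mulVec u) ⬝ᵥ (N.mulVec u)
      = star u ⬝ᵥ u := by
    rw [key, key, ← dotProduct_add, ← add_mulVec, hMN, one_mulVec]
  unfold qnorm
  rw [← this, Complex.add_re]

theorem eigenvector_of_corner_product
    {m₁ m₂ p : ℕ}
    (A₁₁ : Matrix (Fin m₁) (Fin m₁) ℂ) (A₁₂ : Matrix (Fin m₁) (Fin p) ℂ)
    (A₂₁ : Matrix (Fin p) (Fin m₁) ℂ) (A₂₂ : Matrix (Fin p) (Fin p) ℂ)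
    (B₁₁ : Matrix (Fin p) (Fin p) ℂ) (B₁₂ : Matrix (Fin p) (Fin m₂) ℂ)
    (B₂₁ : Matrix (Fin m₂) (Fin p) ℂ) (B₂₂ : Matrix (Fin m₂) (Fin m₂) ℂ)
    (hU1 : fromBlocks A₁₁ A₁₂ A₂₁ A₂₂ ∈ Matrix.unitaryGroup (Fin m₁ ⊕ Fin p) ℂ)
    (hU2 : fromBlocks B₁₁ B₁₂ B₂₁ B₂₂ ∈ Matrix.unitaryGroup (Fin p ⊕ Fin m₂) ℂ)
    (V : Matrix (Fin p) (Fin p) ℂ) (hV : V ∈ Matrix.unitaryGroup (Fin p) ℂ)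
    (c : Fin p → ℂ) (hc : c ≠ 0)
    (h : (V * A₂₂ * Vᴴ * B₁₁).mulVec c = c) :
    (B₁₁ᴴ * B₁₁).mulVec c = c ∧ B₂₁.mulVec c = 0 := by
  have hu1 : (fromBlocks A₁₁ A₁₂ A₂₁ A₂₂)ᴴ * fromBlocks A₁₁ A₁₂ A₂₁ A₂₂ = 1 := hU1.1
  have hu2 : (fromBlocks B₁₁ B₁₂ B₂₁ B₂₂)ᴴ * fromBlocks B₁₁ B₁₂ B₂₁ B₂₂ = 1 := hU2.1
  rw [fromBlocks_conjTranspose, fromBlocks_multiply, ← fromBlocks_one] at hu1 hu2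
  have E₁ : A₁₂ᴴ * A₁₂ + A₂₂ᴴ * A₂₂ = 1 := by
    have := congrArg Matrix.toBlocks₂₂ hu1
    rw [toBlocks_fromBlocks₂₂, toBlocks_fromBlocks₂₂] at this
    exact this
  have E₂ : B₁₁ᴴ * B₁₁ + B₂₁ᴴ * B₂₁ = 1 := by
    have := congrArg Matrix.toBlocks₁₁ hu2
    rw [toBlocks_fromBlocks₁₁, toBlocks_fromBlocks₁₁] at this
    exact this
  have hV1 : Vᴴ * V = 1 := hV.1
  have hV2 : V * Vᴴ = 1 := hV.2
  set x := B₁₁.mulVec c with hx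
  set y := B₂₁.mulVec c with hy
  have hsplit : qnorm c = qnorm x + qnorm y := qnorm_split E₂ c
  -- unitary invariance
  have hVinv : ∀ (u : Fin p → ℂ), qnorm (V.mulVec u) = qnorm u := by
    intro u
    unfold qnorm
    rw [key, hV1, one_mulVec]
  have hVHinv : ∀ (u : Fin p → ℂ), qnorm (Vᴴ.mulVec u) = qnorm u := by
    intro u
    unfold qnorm
    rw [key, conjTranspose_conjTranspose, hV2, one_mulVec]
  -- contraction for A₂₂
  have hcontr : ∀ (u : Fin p → ℂ), qnorm (A₂₂.mulVec u) ≤ qnorm u := by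
    intro u
    rw [qnorm_split E₁ u]
    linarith [qnorm_nonneg (A₁₂.mulVec u)]
  -- c = V *ᵥ (A₂₂ *ᵥ (Vᴴ *ᵥ x))
  have hc' : V.mulVec (A₂₂.mulVec (Vᴴ.mulVec x)) = c := by
    rw [hx, mulVec_mulVec, mulVec_mulVec, mulVec_mulVec]
    exact h
  have hle : qnorm c ≤ qnorm x := by
    calc qnorm c = qnorm (A₂₂.mulVec (Vᴴ.mulVec x)) := by rw [← hc', hVinv]
    _ ≤ qnorm (Vᴴ.mulVec x) := hcontr _
    _ = qnorm x := hVHinv _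
  have hy0 : y = 0 := qnorm_eq_zero (by linarith)
  refine ⟨?_, hy0⟩
  have : (B₁₁ᴴ * B₁₁).mulVec c + (B₂₁ᴴ * B₂₁).mulVec c = c := by
    rw [← add_mulVec, E₂, one_mulVec]
  have h2 : (B₂₁ᴴ * B₂₁).mulVec c = B₂₁ᴴ.mulVec y := by rw [hy, mulVec_mulVec]
  rw [h2, hy0, mulVec_zero, add_zero] at this
  exact this
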